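/- The cross product of three vectors in R^4, defined by [x1,x2,x3] = the formal determinant whose rows are the coordinates of x1,x2,x3 and the standard basis vectors e1,e2,e3,e4, makes R^4 into a ternary Nambu-Lie algebra: the bracket is skew-symmetric and satisfies the fundamental identity [x1,x2,[x3,x4,x5]] = [[x1,x2,x3],x4,x5] + [x3,[x1,x2,x4],x5] + [x3,x4,[x1,x2,x5]]. -/

import Mathlib

/-- The generalized cross product of three vectors in `ℝ⁴`: the vector whose `i`-th
coordinate is the determinant of the matrix with rows `x, y, z` and the `i`-th standard
basis vector, i.e. the vector characterized by `⟨[x,y,z], w⟩ = det(x,y,z,w)`. -/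
noncomputable def cross4 (x y z : Fin 4 → ℝ) : Fin 4 → ℝ :=
  fun i => Matrix.det (Matrix.of ![x, y, z, fun j => if j = i then (1 : ℝ) else 0])

private lemma cross4_zero (x y z : Fin 4 → ℝ) : cross4 x y z 0 =
    x 1 * y 3 * z 2 - x 1 * y 2 * z 3 + x 2 * y 1 * z 3 - x 2 * y 3 * z 1
      + x 3 * y 2 * z 1 - x 3 * y 1 * z 2 := by
  show Matrix.det _ = _
  simp [Matrix.det_succ_row_zero, Fin.sum_univ_succ, Fin.succAbove,
    show (Fin.succ 2 : Fin 4) = 3 from rfl, show (Fin.castSucc 2 : Fin 4) = 2 from rfl]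
  ring

private lemma cross4_one (x y z : Fin 4 → ℝ) : cross4 x y z 1 =
    x 0 * y 2 * z 3 - x 0 * y 3 * z 2 + x 2 * y 3 * z 0 - x 2 * y 0 * z 3
      + x 3 * y 0 * z 2 - x 3 * y 2 * z 0 := by
  show Matrix.det _ = _
  simp [Matrix.det_succ_row_zero, Fin.sum_univ_succ, Fin.succAbove,
    show (Fin.succ 2 : Fin 4) = 3 from rfl, show (Fin.castSucc 2 : Fin 4) = 2 from rfl]
  ring

private lemma cross4_two (x y z : Fin 4 → ℝ) : cross4 x y z 2 =
    x 0 * y 3 * z 1 - x 0 * y 1 * z 3 + x 1 * y 0 * z 3 - x 1 * y 3 * z 0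
      + x 3 * y 1 * z 0 - x 3 * y 0 * z 1 := by
  show Matrix.det _ = _
  simp [Matrix.det_succ_row_zero, Fin.sum_univ_succ, Fin.succAbove,
    show (Fin.succ 2 : Fin 4) = 3 from rfl, show (Fin.castSucc 2 : Fin 4) = 2 from rfl]
  ring

private lemma cross4_three (x y z : Fin 4 → ℝ) : cross4 x y z 3 =
    x 0 * y 1 * z 2 - x 0 * y 2 * z 1 + x 1 * y 2 * z 0 - x 1 * y 0 * z 2
      + x 2 * y 0 * z 1 - x 2 * y 1 * z 0 := by
  show Matrix.det _ = _
  simp [Matrix.det_succ_row_zero, Fin.sum_univ_succ, Fin.succAbove,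
    show (Fin.succ 2 : Fin 4) = 3 from rfl, show (Fin.castSucc 2 : Fin 4) = 2 from rfl]
  ring

theorem stmt7 :
    (∀ x y z : Fin 4 → ℝ, cross4 x y z = - cross4 y x z) ∧
    (∀ x y z : Fin 4 → ℝ, cross4 x y z = - cross4 x z y) ∧
    (∀ x1 x2 x3 x4 x5 : Fin 4 → ℝ,
      cross4 x1 x2 (cross4 x3 x4 x5) =
        cross4 (cross4 x1 x2 x3) x4 x5 + cross4 x3 (cross4 x1 x2 x4) x5 +
          cross4 x3 x4 (cross4 x1 x2 x5)) := by
  refine ⟨fun x y z => ?_, fun x y z => ?_, fun x1 x2 x3 x4 x5 => ?_⟩ <;>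
    funext i <;> fin_cases i <;>
    simp [Pi.neg_apply, Pi.add_apply, cross4_zero, cross4_one, cross4_two, cross4_three] <;>
    ring
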